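/- Let q be a prime power and let k, s, n be positive integers with s < k. If q^k − 1 divides n and the polynomial X^{q^k − 1} + X^{q^s − 1} + 1 is irreducible over 𝔽_q, then X^{q^k} + X^{q^s} + X is a subspace polynomial with respect to 𝔽_{q^n}: there exists a k-dimensional 𝔽_q-subspace V of 𝔽_{q^n} such that ∏_{v∈V}(X − v) = X^{q^k} + X^{q^s} + X. -/

import Mathlib

open Polynomial

/-- The `m`-quasi cyclic shift of a subspace `V` by `a`: `a • V = {a * v : v ∈ V}`. -/
noncomputable def qshift {K F : Type*} [Field K] [Field F] [Algebra K F]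
    (a : F) (V : Submodule K F) : Submodule K F :=
  V.map (LinearMap.mulLeft K a)

/-- The subspace polynomial `L_V(X) = ∏_{v ∈ V} (X - v)` of a subspace `V` of a
finite field. -/
noncomputable def subspacePoly {K F : Type*} [Field K] [Field F] [Algebra K F] [Fintype F]
    (V : Submodule K F) : F[X] :=
  ∏ v ∈ (Set.toFinite (V : Set F)).toFinset, (X - C v)

/-- The subspace distance `d(U,V) = dim U + dim V - 2 dim (U ⊓ V)`. -/
noncomputable def subspaceDist {K F : Type*} [Field K] [Field F] [Algebra K F]
    (U V : Submodule K F) : ℕ :=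
  Module.finrank K U + Module.finrank K V - 2 * Module.finrank K ↥(U ⊓ V)

lemma tri_monic {R : Type*} [Field R] {a b : ℕ} (h : 0 < b) (hba : b < a) :
    Monic (X ^ a + X ^ b + (1 : R[X])) := by
  monicity!
  simp [Nat.le_of_lt hba, Nat.not_le.mpr hba, h.ne', (h.trans hba).ne']

lemma tri_natDegree {R : Type*} [Field R] {a b : ℕ} (h : 0 < b) (hba : b < a) :
    (X ^ a + X ^ b + (1 : R[X])).natDegree = a := by
  compute_degree! <;>
  simp [Nat.le_of_lt hba, Nat.not_le.mpr hba, h.ne', (h.trans hba).ne', hba.ne']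

lemma triX_monic {R : Type*} [Field R] {a b : ℕ} (h : 1 < b) (hba : b < a) :
    Monic (X ^ a + X ^ b + (X : R[X])) := by
  monicity!
  all_goals try simp [show b ≤ a from hba.le, show ¬ a ≤ b from by omega, show a ⊔ 1 = a from by omega,
    show 1 ≤ a from by omega, show a ≠ b from by omega, show b ≠ a from by omega,
    show a ≠ 1 from by omega, show (1:ℕ) ≠ a from by omega]
  all_goals omega

lemma triX_natDegree {R : Type*} [Field R] {a b : ℕ} (h : 1 < b) (hba : b < a) :
    (X ^ a + X ^ b + (X : R[X])).natDegree = a := by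
  compute_degree!
  all_goals try simp [show b ≤ a from hba.le, show ¬ a ≤ b from by omega, show a ⊔ 1 = a from by omega,
    show 1 ≤ a from by omega, show a ≠ b from by omega, show b ≠ a from by omega,
    show a ≠ 1 from by omega, show (1:ℕ) ≠ a from by omega]
  all_goals omega

theorem trinomial_is_subspacePoly_of_irreducible
    {K F : Type*} [Field K] [Fintype K] [Field F] [Fintype F] [Algebra K F]
    (q n k s : ℕ) (hq : Fintype.card K = q) (hn : 0 < n)
    (hF : Module.finrank K F = n) (hs : 0 < s) (hsk : s < k)
    (hdvd : q ^ k - 1 ∣ n)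
    (hirr : Irreducible (X ^ (q ^ k - 1) + X ^ (q ^ s - 1) + 1 : K[X])) :
    ∃ V : Submodule K F, Module.finrank K ↥V = k ∧
      subspacePoly V = X ^ q ^ k + X ^ q ^ s + X := by
  classical
  have hq2 : 2 ≤ q := hq ▸ Fintype.one_lt_card
  have hq1 : 1 < q := hq2
  have hks : q ^ s < q ^ k := Nat.pow_lt_pow_right hq1 hsk
  have hqs2 : 1 < q ^ s := Nat.one_lt_pow hs.ne' hq1
  have hqk1 : 1 < q ^ k := hqs2.trans hks
  have hqn1 : 1 < q ^ n := Nat.one_lt_pow hn.ne' hq1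
  have hks' : q ^ s - 1 < q ^ k - 1 := by omega
  have hqs0 : 0 < q ^ s - 1 := by omega
  set g : K[X] := X ^ (q ^ k - 1) + X ^ (q ^ s - 1) + 1 with hgdef
  have hgmonic : g.Monic := tri_monic hqs0 hks'
  have hgdeg : g.natDegree = q ^ k - 1 := tri_natDegree hqs0 hks'
  haveI := Fact.mk hirr
  -- the field L = K[X]/(g)
  set L := AdjoinRoot g with hL
  haveI : Module.Finite K L := (AdjoinRoot.powerBasis hirr.ne_zero).finite
  haveI : Finite L := Module.finite_of_finite K
  haveI : Fintype L := Fintype.ofFinite L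
  have hfrL : Module.finrank K L = q ^ k - 1 := by
    rw [(AdjoinRoot.powerBasis hirr.ne_zero).finrank, AdjoinRoot.powerBasis_dim, hgdeg]
  have hcardL : Fintype.card L = q ^ (q ^ k - 1) := by
    rw [Module.card_eq_pow_finrank (K := K), hq, hfrL]
  set α : L := AdjoinRoot.root g with hα
  have hmin : minpoly K α = g := by
    rw [hα, AdjoinRoot.minpoly_root hirr.ne_zero, hgmonic.leadingCoeff, inv_one, map_one, mul_one]
  have hα0 : α ≠ 0 := by
    intro h0
    have h := minpoly.aeval K α
    rw [hmin, h0] at h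
    simp only [hgdef, map_add, map_pow, aeval_X, map_one] at h
    simp [zero_pow (show q ^ k - 1 ≠ 0 by omega), zero_pow hqs0.ne'] at h
  set M : ℕ := q ^ (q ^ k - 1) with hM
  have hM1 : 1 < M := Nat.one_lt_pow (by omega) hq1
  have hpow : α ^ (M - 1) = 1 := by
    have h1 : α ^ M = α := by rw [← hcardL]; exact FiniteField.pow_card α
    have h2 : α ^ (M - 1) * α = 1 * α := by
      rw [one_mul, ← pow_succ, Nat.sub_add_cancel hM1.le, h1]
    exact mul_right_cancel₀ hα0 h2
  have dvd1 : g ∣ (X ^ (M - 1) - 1 : K[X]) := by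
    rw [← hmin]
    exact minpoly.dvd K α (by rw [map_sub, map_pow, aeval_X, map_one, hpow, sub_self])
  have dvd2 : (X ^ (M - 1) - 1 : K[X]) ∣ X ^ (q ^ n - 1) - 1 := by
    have hd : (M - 1) ∣ (q ^ n - 1) := by
      obtain ⟨m, hm⟩ := hdvd
      have h := Nat.sub_dvd_pow_sub_pow (q ^ (q ^ k - 1)) 1 m
      rwa [one_pow, ← pow_mul, ← hm] at h
    obtain ⟨t, ht⟩ := hd
    have h := sub_dvd_pow_sub_pow (X ^ (M - 1) : K[X]) 1 t
    rwa [one_pow, ← pow_mul, ← ht] at h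
  have dvdK : (X ^ q ^ k + X ^ q ^ s + X : K[X]) ∣ X ^ q ^ n - X := by
    have e1 : q ^ k - 1 + 1 = q ^ k := by omega
    have e2 : q ^ s - 1 + 1 = q ^ s := by omega
    have h1 : (X ^ q ^ k + X ^ q ^ s + X : K[X]) = X * g := by
      rw [hgdef, mul_add, mul_add, mul_one, ← pow_succ', ← pow_succ', e1, e2]
    have h2 : (X ^ q ^ n - X : K[X]) = X * (X ^ (q ^ n - 1) - 1) := by
      rw [mul_sub, mul_one, ← pow_succ', Nat.sub_add_cancel hqn1.le]
    rw [h1, h2]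
    exact mul_dvd_mul_left X (dvd1.trans dvd2)
  -- move to F
  set P : F[X] := X ^ q ^ k + X ^ q ^ s + X with hPdef
  have dvdF : P ∣ X ^ q ^ n - X := by
    have h := Polynomial.map_dvd (algebraMap K F) dvdK
    simpa [Polynomial.map_add, Polynomial.map_sub, Polynomial.map_pow, Polynomial.map_X] using h
  have hcardF : Fintype.card F = q ^ n := by
    rw [Module.card_eq_pow_finrank (K := K), hq, hF]
  have hPmonic : P.Monic := triX_monic hqs2 hks
  have hPdeg : P.natDegree = q ^ k := triX_natDegree hqs2 hks
  have hP0 : P ≠ 0 := hPmonic.ne_zero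
  set big : F[X] := X ^ q ^ n - X with hbigdef
  have hbig0 : big ≠ 0 := FiniteField.X_pow_card_sub_X_ne_zero F hqn1
  have hbigroots : big.roots = Finset.univ.val := by
    rw [hbigdef, ← hcardF]
    exact FiniteField.roots_X_pow_card_sub_X F
  have hbigdeg : big.natDegree = q ^ n := by
    rw [hbigdef, ← hcardF]
    exact FiniteField.X_pow_card_sub_X_natDegree_eq F Fintype.one_lt_card
  have hbigsplits : big.Splits := by
    rw [splits_iff_card_roots]
    rw [hbigroots, hbigdeg]
    simpa using hcardF
  have hPsplits : P.Splits :=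
    hbigsplits.of_dvd hbig0 dvdF
  have hProots_card : Multiset.card P.roots = q ^ k := by
    rw [splits_iff_card_roots] at hPsplits
    rw [hPsplits, hPdeg]
  have hPnodup : P.roots.Nodup := by
    refine Multiset.nodup_of_le (roots.le_of_dvd hbig0 dvdF) ?_
    rw [hbigroots]
    exact Finset.univ.nodup
  have hPsplits' : P.Splits :=
    hbigsplits.of_dvd hbig0 dvdF
  have hPprod : P = (P.roots.map fun a => X - C a).prod :=
    hPsplits'.eq_prod_roots_of_monic hPmonic
  -- characteristic facts
  obtain ⟨p, hp⟩ := CharP.exists K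
  haveI := hp
  obtain ⟨e, hpe, hqe⟩ := FiniteField.card K p
  haveI : Fact p.Prime := ⟨hpe⟩
  haveI : CharP F p := charP_of_injective_algebraMap (algebraMap K F).injective p
  have hqpe : q = p ^ (e : ℕ) := by rw [← hq, hqe]
  have frobk : ∀ x y : F, (x + y) ^ q ^ k = x ^ q ^ k + y ^ q ^ k := by
    intro x y
    rw [hqpe, ← pow_mul]
    exact add_pow_char_pow x y p _
  have frobs : ∀ x y : F, (x + y) ^ q ^ s = x ^ q ^ s + y ^ q ^ s := by
    intro x y
    rw [hqpe, ← pow_mul]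
    exact add_pow_char_pow x y p _
  -- the subspace V
  set V : Submodule K F :=
    { carrier := {x : F | x ^ q ^ k + x ^ q ^ s + x = 0}
      add_mem' := by
        intro a b ha hb
        simp only [Set.mem_setOf_eq] at ha hb ⊢
        rw [frobk, frobs]
        linear_combination ha + hb
      zero_mem' := by
        simp [zero_pow (by omega : q ^ k ≠ 0), zero_pow (by omega : q ^ s ≠ 0),
          Set.mem_setOf_eq]
      smul_mem' := by
        intro c x hx
        simp only [Set.mem_setOf_eq] at hx ⊢
        have hc : ∀ m : ℕ, (algebraMap K F c) ^ q ^ m = algebraMap K F c := fun m => by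
          rw [← map_pow, ← hq, FiniteField.pow_card_pow]
        rw [Algebra.smul_def, mul_pow, mul_pow, hc k, hc s]
        linear_combination (algebraMap K F c) * hx } with hVdef
  have memV : ∀ x : F, x ∈ V ↔ x ∈ P.roots := by
    intro x
    rw [mem_roots hP0, IsRoot.def, hPdef]
    simp only [eval_add, eval_pow, eval_X]
    exact Iff.rfl
  have hVset : ((Set.toFinite (V : Set F)).toFinset) = P.roots.toFinset := by
    ext x
    rw [Set.Finite.mem_toFinset, Multiset.mem_toFinset, SetLike.mem_coe]
    exact memV x
  have hsp : subspacePoly V = P := by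
    rw [subspacePoly, hVset, Finset.prod_eq_multiset_prod, Multiset.toFinset_val,
      Multiset.dedup_eq_self.mpr hPnodup, ← hPprod]
  haveI : Fintype ↥V := Fintype.ofFinite _
  have hcV : Fintype.card ↥V = q ^ k := by
    have h1 : Fintype.card ↥V = Nat.card ↥V := Nat.card_eq_fintype_card.symm
    have h2 : Nat.card ↥V = (V : Set F).ncard := Nat.card_coe_set_eq _
    rw [h1, h2, Set.ncard_eq_toFinset_card _ (Set.toFinite _), hVset,
      Multiset.toFinset_card_of_nodup hPnodup, hProots_card]
  have hfrV : Module.finrank K ↥V = k := by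
    have h := Module.card_eq_pow_finrank (K := K) (V := ↥V)
    rw [hcV, hq] at h
    exact (Nat.pow_right_injective hq2 h.symm)
  exact ⟨V, hfrV, by rw [hsp]⟩
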